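/- Let N ≥ 1 and let w : ℝ → ℝ be measurable with ∫ |λ|^j |w(λ)| dλ < ∞ for 0 ≤ j ≤ 2N−2. Suppose P_0, P_1, …, P_{N−1} are monic real polynomials with deg P_n = n that are orthogonal with respect to w, i.e. ∫ P_n(λ) P_m(λ) w(λ) dλ = 0 for n ≠ m, and set h_n := ∫ P_n(λ)^2 w(λ) dλ. Then (1/N!) ∫_{ℝ^N} Δ(λ_1,…,λ_N)^2 ∏_{k=1}^N w(λ_k) dλ = ∏_{n=0}^{N−1} h_n. (This is the orthogonal-polynomial evaluation Z_N = h_0 h_1 ⋯ h_{N−1} of the one-matrix model partition function.) -/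

import Mathlib

open MeasureTheory

/-- The Vandermonde product `Δ(l₁,…,l_N) = ∏_{j<i} (l_i − l_j)`. -/
noncomputable def vdm {N : ℕ} (l : Fin N → ℝ) : ℝ :=
  ∏ i : Fin N, ∏ j ∈ Finset.Ioi i, (l j - l i)

theorem stmt3 (N : ℕ) (hN : 1 ≤ N) (w : ℝ → ℝ) (hw : Measurable w)
    (hint : ∀ j : ℕ, j ≤ 2 * N - 2 →
      Integrable (fun x : ℝ => |x| ^ j * |w x|))
    (P : ℕ → Polynomial ℝ)
    (hmonic : ∀ n < N, (P n).Monic)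
    (hdeg : ∀ n < N, (P n).natDegree = n)
    (horth : ∀ n < N, ∀ m < N, n ≠ m →
      ∫ x : ℝ, (P n).eval x * (P m).eval x * w x = 0)
    (h : ℕ → ℝ) (hh : ∀ n, h n = ∫ x : ℝ, ((P n).eval x) ^ 2 * w x) :
    (1 / (N.factorial : ℝ)) *
        ∫ lam : Fin N → ℝ, (vdm lam) ^ 2 * ∏ k : Fin N, w (lam k) =
      ∏ n ∈ Finset.range N, h n := by
  classical
  set f : ℕ → ℕ → ℝ → ℝ := fun n m x => (P n).eval x * (P m).eval x * w x with hfdef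
  -- integrability of (polynomial of degree ≤ 2N-2) * w
  have hQint : ∀ Q : Polynomial ℝ, Q.natDegree ≤ 2 * N - 2 →
      Integrable (fun x => Q.eval x * w x) := by
    intro Q hQ
    have hmeas : AEStronglyMeasurable (fun x => Q.eval x * w x) volume :=
      (Q.continuous.measurable.mul hw).aestronglyMeasurable
    have hg : Integrable (fun x => ∑ j ∈ Finset.range (2 * N - 1),
        |Q.coeff j| * (|x| ^ j * |w x|)) := by
      apply integrable_finset_sum
      intro j hj
      exact (hint j (by have := Finset.mem_range.mp hj; omega)).const_mul _
    refine hg.mono' hmeas ?_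
    filter_upwards with x
    have hE : Q.eval x = ∑ j ∈ Finset.range (2 * N - 1), Q.coeff j * x ^ j :=
      Polynomial.eval_eq_sum_range' (by omega) x
    rw [Real.norm_eq_abs, abs_mul, hE]
    calc |∑ j ∈ Finset.range (2 * N - 1), Q.coeff j * x ^ j| * |w x|
        ≤ (∑ j ∈ Finset.range (2 * N - 1), |Q.coeff j * x ^ j|) * |w x| :=
          mul_le_mul_of_nonneg_right (Finset.abs_sum_le_sum_abs _ _) (abs_nonneg _)
      _ = ∑ j ∈ Finset.range (2 * N - 1), |Q.coeff j| * (|x| ^ j * |w x|) := by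
          rw [Finset.sum_mul]
          exact Finset.sum_congr rfl fun j _ => by
            rw [abs_mul, abs_pow, mul_assoc]
  have hfInt : ∀ n < N, ∀ m < N, Integrable (f n m) := by
    intro n hn m hm
    have hfe : f n m = fun x => (P n * P m).eval x * w x := by
      funext x; simp [hfdef, Polynomial.eval_mul]
    rw [hfe]
    apply hQint
    calc (P n * P m).natDegree ≤ (P n).natDegree + (P m).natDegree :=
          Polynomial.natDegree_mul_le
      _ = n + m := by rw [hdeg n hn, hdeg m hm]
      _ ≤ 2 * N - 2 := by omega
  set s : Equiv.Perm (Fin N) → ℝ := fun σ => ((Equiv.Perm.sign σ : ℤ) : ℝ) with hsdef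
  -- determinant expansion of the Vandermonde
  have hdetA : ∀ lam : Fin N → ℝ,
      vdm lam = ∑ σ : Equiv.Perm (Fin N), s σ * ∏ i : Fin N, (P (σ i)).eval (lam i) := by
    intro lam
    have h1 : vdm lam = (Matrix.vandermonde lam).det := (Matrix.det_vandermonde lam).symm
    rw [h1, Matrix.det_eval_matrixOfPolynomials_eq_det_vandermonde lam (fun i => P i)
        (fun i => hdeg i i.is_lt) (fun i => hmonic i i.is_lt), ← Matrix.det_transpose,
        Matrix.det_apply']
    exact Finset.sum_congr rfl fun σ _ => by
      simp [Matrix.transpose_apply, hsdef]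
  have key : ∀ lam : Fin N → ℝ,
      vdm lam ^ 2 * ∏ k : Fin N, w (lam k) =
        ∑ σ : Equiv.Perm (Fin N), ∑ τ : Equiv.Perm (Fin N),
          (s σ * s τ) * ∏ i : Fin N, f (σ i) (τ i) (lam i) := by
    intro lam
    rw [sq, hdetA lam, Finset.sum_mul_sum, Finset.sum_mul]
    refine Finset.sum_congr rfl fun σ _ => ?_
    rw [Finset.sum_mul]
    refine Finset.sum_congr rfl fun τ _ => ?_
    have hp : (∏ i : Fin N, f (σ i) (τ i) (lam i)) =
        (∏ i : Fin N, (P (σ i)).eval (lam i)) * (∏ i : Fin N, (P (τ i)).eval (lam i)) *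
          ∏ i : Fin N, w (lam i) := by
      rw [← Finset.prod_mul_distrib, ← Finset.prod_mul_distrib]
    rw [hp]; ring
  have hIntTerm : ∀ σ τ : Equiv.Perm (Fin N),
      Integrable (fun lam : Fin N → ℝ => (s σ * s τ) * ∏ i : Fin N, f (σ i) (τ i) (lam i)) := by
    intro σ τ
    exact (Integrable.fintype_prod (f := fun i : Fin N => f (σ i) (τ i))
      (fun i => hfInt _ (Fin.is_lt _) _ (Fin.is_lt _))).const_mul _
  have hmain : ∫ lam : Fin N → ℝ, (vdm lam) ^ 2 * ∏ k : Fin N, w (lam k) =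
      (N.factorial : ℝ) * ∏ n ∈ Finset.range N, h n := by
    calc ∫ lam : Fin N → ℝ, (vdm lam) ^ 2 * ∏ k : Fin N, w (lam k)
        = ∫ lam : Fin N → ℝ, ∑ σ : Equiv.Perm (Fin N), ∑ τ : Equiv.Perm (Fin N),
            (s σ * s τ) * ∏ i : Fin N, f (σ i) (τ i) (lam i) :=
          integral_congr_ae (Filter.Eventually.of_forall key)
      _ = ∑ σ : Equiv.Perm (Fin N), ∫ lam : Fin N → ℝ, ∑ τ : Equiv.Perm (Fin N),
            (s σ * s τ) * ∏ i : Fin N, f (σ i) (τ i) (lam i) :=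
          integral_finset_sum _ fun σ _ => integrable_finset_sum _ fun τ _ => hIntTerm σ τ
      _ = ∑ σ : Equiv.Perm (Fin N), ∑ τ : Equiv.Perm (Fin N), ∫ lam : Fin N → ℝ,
            (s σ * s τ) * ∏ i : Fin N, f (σ i) (τ i) (lam i) :=
          Finset.sum_congr rfl fun σ _ => integral_finset_sum _ fun τ _ => hIntTerm σ τ
      _ = ∑ σ : Equiv.Perm (Fin N), ∑ τ : Equiv.Perm (Fin N),
            (s σ * s τ) * ∏ i : Fin N, ∫ x : ℝ, f (σ i) (τ i) x := by
          refine Finset.sum_congr rfl fun σ _ => Finset.sum_congr rfl fun τ _ => ?_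
          rw [integral_const_mul,
            MeasureTheory.integral_fintype_prod_volume_eq_prod (ι := Fin N) (fun i => f (σ i) (τ i))]
      _ = ∑ _σ : Equiv.Perm (Fin N), ∏ n ∈ Finset.range N, h n := by
          refine Finset.sum_congr rfl fun σ _ => ?_
          rw [Finset.sum_eq_single σ]
          · have hsq : s σ * s σ = 1 := by
              rcases Int.units_eq_one_or (Equiv.Perm.sign σ) with hu | hu <;> simp [hsdef, hu]
            have hdiag : ∀ i : Fin N, (∫ x : ℝ, f (σ i) (σ i) x) = h (σ i) := by
              intro i
              rw [hh]
              congr 1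
              funext x
              simp only [hfdef]; ring
            rw [hsq, one_mul, Finset.prod_congr rfl fun i _ => hdiag i,
              Equiv.prod_comp σ (fun i : Fin N => h i)]
            exact Fin.prod_univ_eq_prod_range (fun n => h n) N
          · intro τ _ hτ
            obtain ⟨i, hi⟩ : ∃ i, σ i ≠ τ i := by
              by_contra hc
              push_neg at hc
              exact hτ (Equiv.ext fun i => (hc i).symm)
            have h0 : (∫ x : ℝ, f (σ i) (τ i) x) = 0 :=
              horth (σ i) (Fin.is_lt _) (τ i) (Fin.is_lt _)
                (fun hv => hi (Fin.val_injective hv))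
            exact mul_eq_zero_of_right _ (Finset.prod_eq_zero (Finset.mem_univ i) h0)
          · intro hσ; exact absurd (Finset.mem_univ σ) hσ
      _ = (N.factorial : ℝ) * ∏ n ∈ Finset.range N, h n := by
          rw [Finset.sum_const, Finset.card_univ, Fintype.card_perm, Fintype.card_fin,
            nsmul_eq_mul]
  rw [hmain, one_div, inv_mul_cancel_left₀
    (Nat.cast_ne_zero.mpr (Nat.factorial_ne_zero N))]
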